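/- arXiv:1103.0444 — 2 statements merged into one kernel-verified Lean document; each statement's English description precedes it below -/
import Mathlib

section
/- Let d ≥ 2 and k ≥ 2d be integers with gcd(k,d) = 1, and let v and t be integers with 1 ≤ v ≤ d−1, t ≥ 0 and kv = 1 + td. Set θ = (v/d − 1/(kd))·2π. Then for every integer j with 1 ≤ j ≤ d−1, sin((j/2 − d)θ) and sin(jθ/2) have the same (nonzero) sign; in particular sin((j/2 − d)θ) / sin(jθ/2) ≥ 0. -/
open Real Polynomial Finset

noncomputable section

/-- The circular complete graph `K_{k/d}`: vertices `0,…,k-1`, with `i ~ j` iff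
`d ≤ |i-j| ≤ k-d`. -/
def circularCompleteGraph (k d : ℕ) : SimpleGraph (Fin k) where
  Adj i j := i ≠ j ∧ (d : ℤ) ≤ |((i : ℕ) : ℤ) - ((j : ℕ) : ℤ)| ∧
      |((i : ℕ) : ℤ) - ((j : ℕ) : ℤ)| ≤ (k : ℤ) - d
  symm := by
    constructor
    rintro i j ⟨hne, h1, h2⟩
    exact ⟨hne.symm, by rwa [abs_sub_comm], by rwa [abs_sub_comm]⟩
  loopless := by constructor; rintro i ⟨h, -, -⟩; exact h rfl

/-- The Lovász theta number of a finite graph, as the maximum of `∑_{x,y} B x y` over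
symmetric positive semidefinite matrices `B` with trace `1` vanishing on edges. -/
def lovaszTheta {V : Type*} [Fintype V] (G : SimpleGraph V) : ℝ :=
  sSup {r : ℝ | ∃ B : Matrix V V ℝ, B.PosSemidef ∧ (∑ x, B x x) = 1 ∧
    (∀ x y, G.Adj x y → B x y = 0) ∧ r = ∑ x, ∑ y, B x y}

/-- Sign lemma: for `θ = (v/d − 1/(kd))·2π`, the numbers `sin((j/2 − d)θ)` and
`sin(jθ/2)` have the same nonzero sign, for `1 ≤ j ≤ d−1`. -/
theorem sin_same_sign (k d v t : ℕ) (hd : 2 ≤ d) (hk : 2 * d ≤ k)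
    (hcop : Nat.Coprime k d) (hv1 : 1 ≤ v) (hv2 : v ≤ d - 1)
    (hvt : k * v = 1 + t * d)
    (θ : ℝ) (hθ : θ = ((v : ℝ) / d - 1 / (k * d)) * (2 * Real.pi)) :
    ∀ j : ℕ, 1 ≤ j → j ≤ d - 1 →
      0 < Real.sin (((j : ℝ) / 2 - d) * θ) * Real.sin (j * θ / 2) ∧
      0 ≤ Real.sin (((j : ℝ) / 2 - d) * θ) / Real.sin (j * θ / 2) := by
  intro j hj1 hj2
  have hk4 : 4 ≤ k := by omega
  have hc : j * t = t * j := Nat.mul_comm j t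
  -- coprimality of k and t
  have hkt : Nat.Coprime k t := by
    have h1 : Nat.gcd k t ∣ k * v := Dvd.dvd.mul_right (Nat.gcd_dvd_left k t) v
    have h2 : Nat.gcd k t ∣ t * d := Dvd.dvd.mul_right (Nat.gcd_dvd_right k t) d
    have h3 : Nat.gcd k t ∣ 1 := by
      have := Nat.dvd_sub h1 h2
      rwa [hvt, Nat.add_sub_cancel] at this
    exact Nat.eq_one_of_dvd_one h3
  -- non-divisibility facts
  have hnd0 : ¬ k ∣ j * t := by
    intro h
    have : k ∣ j := hkt.dvd_of_dvd_mul_right h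
    have := Nat.le_of_dvd (by omega) this
    omega
  have hnd1 : ¬ k ∣ j * t + 1 := by
    intro h
    have hmul : t * (d - j) + t * j = t * d := by
      rw [← Nat.mul_add, Nat.sub_add_cancel (by omega : j ≤ d)]
    have h2 : k ∣ k * v - (j * t + 1) := Nat.dvd_sub (dvd_mul_right k v) h
    have heq : k * v - (j * t + 1) = t * (d - j) := by omega
    rw [heq] at h2
    have : k ∣ d - j := hkt.dvd_of_dvd_mul_left h2
    have := Nat.le_of_dvd (by omega) this
    omega
  have hnd2 : ¬ k ∣ j * t + 2 := by
    intro h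
    have hmul : t * (2 * d - j) + t * j = t * (2 * d) := by
      rw [← Nat.mul_add, Nat.sub_add_cancel (by omega : j ≤ 2 * d)]
    have h2d : t * (2 * d) = 2 * (t * d) := by ring
    have h2 : k ∣ 2 * (k * v) - (j * t + 2) :=
      Nat.dvd_sub (dvd_mul_of_dvd_right (dvd_mul_right k v) 2) h
    have heq : 2 * (k * v) - (j * t + 2) = t * (2 * d - j) := by omega
    rw [heq] at h2
    have : k ∣ 2 * d - j := hkt.dvd_of_dvd_mul_left h2
    have := Nat.le_of_dvd (by omega) this
    omega
  -- decompose j*t = k*q + r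
  set q := j * t / k with hq
  set r := j * t % k with hr
  have hdm : k * q + r = j * t := Nat.div_add_mod (j * t) k
  have hrk : r < k := Nat.mod_lt _ (by omega)
  have hr1 : 1 ≤ r := by
    rcases Nat.eq_zero_or_pos r with h | h
    · exact absurd ⟨q, by omega⟩ hnd0
    · exact h
  have hr3 : r + 2 < k := by
    rcases (by omega : r + 2 < k ∨ r = k - 1 ∨ r = k - 2) with h | h | h
    · exact h
    · exact absurd ⟨q + 1, by rw [Nat.mul_add, Nat.mul_one]; omega⟩ hnd1
    · exact absurd ⟨q + 1, by rw [Nat.mul_add, Nat.mul_one]; omega⟩ hnd2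
  -- real arithmetic
  have hd0 : (0:ℝ) < d := by positivity
  have hk0 : (0:ℝ) < k := by exact_mod_cast (by omega : 0 < k)
  have hdne : (d:ℝ) ≠ 0 := ne_of_gt hd0
  have hkne : (k:ℝ) ≠ 0 := ne_of_gt hk0
  have hvtR : (k:ℝ) * v = 1 + t * d := by exact_mod_cast hvt
  have hθ' : θ = 2 * π * t / k := by
    rw [hθ]; field_simp; linear_combination hvtR
  have hjtR : (j:ℝ) * t = k * q + r := by exact_mod_cast hdm.symm
  have hang1 : (j:ℝ) * θ / 2 = π * r / k + (q:ℕ) * π := by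
    rw [hθ']; field_simp; linear_combination hjtR
  have hang2 : ((j:ℝ) / 2 - d) * θ = π * (r + 2) / k + ((((q:ℤ) - 2 * (v:ℤ)) : ℤ) : ℝ) * π := by
    rw [hθ']; push_cast; field_simp
    linear_combination hjtR + 2 * hvtR
  have hA : 0 < Real.sin (π * r / k) := by
    apply sin_pos_of_pos_of_lt_pi
    · have : (0:ℝ) < r := by exact_mod_cast hr1
      positivity
    · rw [div_lt_iff₀ hk0]
      have : (r:ℝ) < k := by exact_mod_cast hrk
      nlinarith [pi_pos]
  have hB : 0 < Real.sin (π * ((r:ℝ) + 2) / k) := by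
    apply sin_pos_of_pos_of_lt_pi
    · positivity
    · rw [div_lt_iff₀ hk0]
      have : (r:ℝ) + 2 < k := by exact_mod_cast hr3
      nlinarith [pi_pos]
  have hs1 : Real.sin ((j:ℝ) * θ / 2) = (-1) ^ q * Real.sin (π * r / k) := by
    rw [hang1, Real.sin_add_nat_mul_pi]
  have hs2 : Real.sin (((j:ℝ) / 2 - d) * θ)
      = (-1 : ℝ) ^ ((q:ℤ) - 2 * v) * Real.sin (π * ((r:ℝ) + 2) / k) := by
    rw [hang2, Real.sin_add_int_mul_pi]
  have hsign : ((-1 : ℝ) ^ q) * ((-1 : ℝ) ^ ((q:ℤ) - 2 * v)) = 1 := by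
    rw [← zpow_natCast (-1 : ℝ) q, ← zpow_add₀ (by norm_num : (-1:ℝ) ≠ 0)]
    rw [show (q:ℤ) + ((q:ℤ) - 2 * v) = 2 * ((q:ℤ) - v) by ring, zpow_mul]
    norm_num
  have hprod : 0 < Real.sin (((j:ℝ) / 2 - d) * θ) * Real.sin ((j:ℝ) * θ / 2) := by
    rw [hs1, hs2]
    have key : (-1 : ℝ) ^ ((q:ℤ) - 2 * v) * Real.sin (π * ((r:ℝ) + 2) / k) *
        ((-1) ^ q * Real.sin (π * r / k))
        = ((-1 : ℝ) ^ q * ((-1 : ℝ) ^ ((q:ℤ) - 2 * v))) *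
          (Real.sin (π * ((r:ℝ) + 2) / k) * Real.sin (π * r / k)) := by ring
    rw [key, hsign, one_mul]
    positivity
  refine ⟨hprod, ?_⟩
  have hne : Real.sin ((j:ℝ) * θ / 2) ≠ 0 := by
    intro h; rw [h, mul_zero] at hprod; exact lt_irrefl 0 hprod
  have hdiv : Real.sin (((j:ℝ) / 2 - d) * θ) / Real.sin ((j:ℝ) * θ / 2)
      = (Real.sin (((j:ℝ) / 2 - d) * θ) * Real.sin ((j:ℝ) * θ / 2)) /
        (Real.sin ((j:ℝ) * θ / 2)) ^ 2 := by
    rw [sq]; field_simp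
  rw [hdiv]
  positivity
end
end

section
/- For all integers k ≥ 2d ≥ 2, the Lovász theta number of the complement of the circular complete graph satisfies ϑ(complement of K_{k/d}) ≤ k/d. -/
open Real Polynomial Finset

noncomputable section

/-- Rotating the outer summation of a triple sum to the inside. -/
lemma sum_rotate {k : ℕ} (f : Fin k → Fin k → Fin k → ℝ) :
    ∑ a, ∑ b, ∑ c, f a b c = ∑ b, ∑ c, ∑ a, f a b c := by
  rw [Finset.sum_comm]
  exact Finset.sum_congr rfl fun b _ => Finset.sum_comm

/-- Upper bound: `ϑ(complement of K_{k/d}) ≤ k/d`. -/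
theorem theta_circular_upper_bound (k d : ℕ) (hd : 1 ≤ d) (hk : 2 * d ≤ k) :
    lovaszTheta (circularCompleteGraph k d)ᶜ ≤ (k : ℝ) / d := by
  have hk0 : 0 < k := by omega
  haveI : NeZero k := ⟨by omega⟩
  have hd0 : (0:ℝ) < d := by exact_mod_cast hd
  apply Real.sSup_le
  swap
  · positivity
  rintro r ⟨B, hB, htr, hedge, rfl⟩
  classical
  set w : Fin k → Fin k → ℝ := fun t i => if ((i - t : Fin k) : ℕ) < d then 1 else 0 with hw
  -- the quadratic form of `B` is nonnegative
  have hQ : ∀ x : Fin k → ℝ, 0 ≤ ∑ i, ∑ j, x i * B i j * x j := by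
    intro x
    have := hB.dotProduct_mulVec_nonneg x
    simpa [dotProduct, Matrix.mulVec, Finset.mul_sum, mul_assoc, mul_comm,
      mul_left_comm] using this
  have hsym : ∀ i j, B i j = B j i := by
    intro i j; have := hB.1.apply i j; simpa using this.symm
  set bil : Fin k → Fin k → ℝ := fun s t => ∑ i, ∑ j, w s i * B i j * w t j with hbil
  -- every vertex lies in exactly `d` windows
  have hwsum : ∀ i : Fin k, ∑ t, w t i = (d : ℝ) := by
    intro i
    have h1 : ∑ t, w t i = ∑ u : Fin k, (if (u : ℕ) < d then (1:ℝ) else 0) :=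
      Fintype.sum_equiv (Equiv.subLeft i) _ _ (fun _ => rfl)
    rw [h1, Finset.sum_boole]
    have hmap : (Finset.univ.filter (fun u : Fin k => (u : ℕ) < d)) =
        Finset.map (Fin.castLEEmb (by omega : d ≤ k)) Finset.univ := by
      ext u
      simp only [Finset.mem_filter, Finset.mem_univ, true_and, Finset.mem_map,
        Fin.castLEEmb, Function.Embedding.coeFn_mk]
      constructor
      · intro hu; exact ⟨⟨u.val, hu⟩, by ext; simp [Fin.castLE]⟩
      · rintro ⟨v, rfl⟩; simpa using v.isLt
    rw [hmap]
    simp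
  -- symmetry of the bilinear form
  have hbilsym : ∀ s t, bil s t = bil t s := by
    intro s t
    rw [hbil]
    simp only
    rw [Finset.sum_comm]
    refine Finset.sum_congr rfl fun j _ => Finset.sum_congr rfl fun i _ => ?_
    rw [hsym i j]; ring
  -- cross terms are bounded by diagonal terms
  have hcross : ∀ s t, 2 * bil s t ≤ bil s s + bil t t := by
    intro s t
    have h := hQ (w s - w t)
    have hexp : ∑ i, ∑ j, (w s - w t) i * B i j * (w s - w t) j
        = bil s s + bil t t - bil s t - bil t s := by
      rw [hbil]
      simp only [Pi.sub_apply, sub_mul, mul_sub, Finset.sum_sub_distrib]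
      ring
    rw [hexp] at h
    have := hbilsym s t
    linarith
  -- total sum of the bilinear form values
  have hC : ∑ s, ∑ t, bil s t = (d:ℝ)^2 * ∑ i, ∑ j, B i j := by
    have hrow : ∀ s, ∑ t, bil s t = (d:ℝ) * ∑ i, ∑ j, w s i * B i j := by
      intro s
      rw [hbil]
      simp only
      rw [sum_rotate (fun t i j => w s i * B i j * w t j)]
      rw [Finset.mul_sum]
      refine Finset.sum_congr rfl fun i _ => ?_
      rw [Finset.mul_sum]
      refine Finset.sum_congr rfl fun j _ => ?_
      rw [← Finset.mul_sum, hwsum j]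
      ring
    calc ∑ s, ∑ t, bil s t = ∑ s, (d:ℝ) * ∑ i, ∑ j, w s i * B i j :=
          Finset.sum_congr rfl fun s _ => hrow s
      _ = (d:ℝ) * ∑ s, ∑ i, ∑ j, w s i * B i j := by rw [Finset.mul_sum]
      _ = (d:ℝ) * ∑ i, ∑ j, ∑ s, w s i * B i j := by
          rw [sum_rotate (fun s i j => w s i * B i j)]
      _ = (d:ℝ) * ∑ i, ∑ j, (d:ℝ) * B i j := by
          congr 1
          refine Finset.sum_congr rfl fun i _ => Finset.sum_congr rfl fun j _ => ?_
          rw [← Finset.sum_mul, hwsum i]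
      _ = (d:ℝ)^2 * ∑ i, ∑ j, B i j := by
          simp only [Finset.mul_sum]
          exact Finset.sum_congr rfl fun i _ => Finset.sum_congr rfl fun j _ => by ring
  -- two points in a common window are adjacent in the complement graph
  have hwin : ∀ t i j : Fin k, i ≠ j → w t i * w t j ≠ 0 →
      ((circularCompleteGraph k d)ᶜ).Adj i j := by
    intro t i j hij hne
    rw [SimpleGraph.compl_adj]
    refine ⟨hij, ?_⟩
    rintro ⟨-, h1, h2⟩
    have hi : ((i - t : Fin k) : ℕ) < d := by
      by_contra h; simp [hw, h] at hne
    have hj : ((j - t : Fin k) : ℕ) < d := by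
      by_contra h; simp [hw, h] at hne
    rw [Fin.sub_def] at hi hj
    simp only at hi hj
    have hiv : i.val < k := i.isLt
    have hjv : j.val < k := j.isLt
    have htv : t.val < k := t.isLt
    have emod : ∀ x : ℕ, x < 2 * k → x % k = x ∨ x % k + k = x := by
      intro x hx
      rcases Nat.lt_or_ge x k with h | h
      · exact Or.inl (Nat.mod_eq_of_lt h)
      · right
        rw [Nat.mod_eq_sub_mod h, Nat.mod_eq_of_lt (by omega)]
        omega
    have e1 := emod (k - t.val + i.val) (by omega)
    have e2 := emod (k - t.val + j.val) (by omega)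
    rcases abs_cases ((i.val : ℤ) - (j.val : ℤ)) with ⟨he, _⟩ | ⟨he, _⟩ <;>
      rw [he] at h1 h2 <;> rcases e1 with e1 | e1 <;> rcases e2 with e2 | e2 <;> omega
  -- sum of diagonal quadratic forms equals d
  have hD : ∑ t, bil t t = (d : ℝ) := by
    have h1 : ∑ t, bil t t = ∑ i, ∑ j, ∑ t, w t i * B i j * w t j := by
      rw [hbil]
      simp only
      exact sum_rotate (fun t i j => w t i * B i j * w t j)
    rw [h1]
    have h2 : ∀ i : Fin k, ∑ j, ∑ t, w t i * B i j * w t j = (d:ℝ) * B i i := by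
      intro i
      rw [Finset.sum_eq_single i]
      · have hsq : ∀ t, w t i * B i i * w t i = w t i * B i i := by
          intro t
          simp only [hw]
          split <;> simp
        rw [Finset.sum_congr rfl fun t _ => hsq t, ← Finset.sum_mul, hwsum i, mul_comm]
      · intro j _ hji
        have hterm : ∀ t, w t i * B i j * w t j = 0 := by
          intro t
          by_cases hz : w t i * w t j = 0
          · rcases mul_eq_zero.1 hz with h | h <;> rw [h] <;> ring
          · have hadj := hwin t i j (fun h => hji h.symm) hz
            rw [hedge i j hadj]; ring
        rw [Finset.sum_congr rfl fun t _ => hterm t]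
        simp
      · simp
    rw [Finset.sum_congr rfl fun i _ => h2 i, ← Finset.mul_sum, htr, mul_one]
  -- put everything together
  have hsumcross : ∑ s, ∑ t, 2 * bil s t ≤ ∑ s, ∑ t, (bil s s + bil t t) :=
    Finset.sum_le_sum fun s _ => Finset.sum_le_sum fun t _ => hcross s t
  have hL : ∑ s, ∑ t, 2 * bil s t = 2 * ((d:ℝ)^2 * ∑ i, ∑ j, B i j) := by
    rw [← hC]
    simp only [Finset.mul_sum]
  have hR : ∑ s, ∑ t, (bil s s + bil t t) = 2 * ((k:ℝ) * d) := by
    have hrow : ∀ s : Fin k, ∑ t, (bil s s + bil t t) = (k:ℝ) * bil s s + (d:ℝ) := by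
      intro s
      rw [Finset.sum_add_distrib, Finset.sum_const, hD]
      simp [mul_comm]
    rw [Finset.sum_congr rfl fun s _ => hrow s, Finset.sum_add_distrib, Finset.sum_const,
      ← Finset.mul_sum, hD]
    simp
    ring
  rw [hL, hR] at hsumcross
  rw [le_div_iff₀ hd0]
  nlinarith
end
end
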